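/- Let f : ℝⁿ → ℝ be a polynomial with Hermite expansion f(y) = Σ_α f̂(α) h_α(y), and let λ ∈ (0,1). Define g := U_{√(1-λ)} f, i.e., g(x) = Σ_α f̂(α)(1-λ)^{|α|/2} h_α(x). Then for all x, y ∈ ℝⁿ: f(√(1-λ)x + √λ y) = Σ_α (∂^α g(x)/√(α!)) · (λ/(1-λ))^{|α|/2} · h_α(y). -/

import Mathlib

open MeasureTheory ProbabilityTheory
open scoped Classical

/-- Normalized probabilist's Hermite polynomial `h_m = H_m / √(m!)` as a function. -/
noncomputable def herm (m : ℕ) (t : ℝ) : ℝ :=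
  ((Polynomial.hermite m).map (Int.castRingHom ℝ)).eval t / Real.sqrt (Nat.factorial m)

/-- The standard gaussian measure `N(0,1)^n` on `ℝ^n`. -/
noncomputable def gaussPi (n : ℕ) : Measure (Fin n → ℝ) := Measure.pi fun _ => gaussianReal 0 1

/-- Multivariate normalized Hermite polynomial `h_α(x) = ∏ i, h_{α i}(x i)`, as a function. -/
noncomputable def hermMvFn {n : ℕ} (α : Fin n →₀ ℕ) (x : Fin n → ℝ) : ℝ :=
  ∏ i, herm (α i) (x i)

/-- Normalized Hermite polynomial as a `Polynomial ℝ`. -/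
noncomputable def hermPoly (m : ℕ) : Polynomial ℝ :=
  Polynomial.C (Real.sqrt (Nat.factorial m))⁻¹ * (Polynomial.hermite m).map (Int.castRingHom ℝ)

/-- Multivariate normalized Hermite polynomial as an `MvPolynomial`. -/
noncomputable def hermMvPoly {n : ℕ} (α : Fin n →₀ ℕ) : MvPolynomial (Fin n) ℝ :=
  ∏ i, Polynomial.aeval (MvPolynomial.X i) (hermPoly (α i))

/-- Mixed partial derivative `∂^α` of a multivariate polynomial. -/
noncomputable def mpderiv {n : ℕ} (α : Fin n →₀ ℕ) (p : MvPolynomial (Fin n) ℝ) :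
    MvPolynomial (Fin n) ℝ :=
  ((List.ofFn fun i : Fin n =>
    (((MvPolynomial.pderiv i).toLinearMap : Module.End ℝ (MvPolynomial (Fin n) ℝ)) ^ (α i))).prod) p

/-- Iterated partial derivative along a sequence of coordinates. -/
noncomputable def pdSeq {n k : ℕ} (v : Fin k → Fin n) (p : MvPolynomial (Fin n) ℝ) :
    MvPolynomial (Fin n) ℝ :=
  ((List.ofFn fun j : Fin k =>
    ((MvPolynomial.pderiv (v j)).toLinearMap : Module.End ℝ (MvPolynomial (Fin n) ℝ))).prod) p

/-- `‖∇^k p(x)‖²`: squared Frobenius norm of the tensor of k-th order partials of `p` at `x`. -/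
noncomputable def gradNormSq {n : ℕ} (k : ℕ) (p : MvPolynomial (Fin n) ℝ) (x : Fin n → ℝ) : ℝ :=
  ∑ v : Fin k → Fin n, (MvPolynomial.eval x (pdSeq v p)) ^ 2

/-- `|α| = Σ_i α_i` for a multi-index. -/
def wt {n : ℕ} (α : Fin n →₀ ℕ) : ℕ := α.sum fun _ k => k

/-- `α! = Π_i (α_i)!` for a multi-index. -/
def fact {n : ℕ} (α : Fin n →₀ ℕ) : ℕ := α.prod fun _ k => Nat.factorial k

/-- `sign(t) = 1` if `t ≥ 0`, else `0`. -/
noncomputable def sgn (t : ℝ) : ℝ := if 0 ≤ t then 1 else 0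

/-- The gaussian restriction `p_{x,λ}(y) = p(√(1-λ)x + √λ y)` as a polynomial in `y`. -/
noncomputable def gaussRestrict {n : ℕ} (p : MvPolynomial (Fin n) ℝ) (lam : ℝ) (x : Fin n → ℝ) :
    MvPolynomial (Fin n) ℝ :=
  MvPolynomial.aeval (fun i => MvPolynomial.C (Real.sqrt (1 - lam) * x i)
    + MvPolynomial.C (Real.sqrt lam) * MvPolynomial.X i) p

/-- Hermite coefficient `q̂(α)` of a polynomial, via gaussian orthonormality. -/
noncomputable def hermCoeff {n : ℕ} (q : MvPolynomial (Fin n) ℝ) (α : Fin n →₀ ℕ) : ℝ :=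
  ∫ y, MvPolynomial.eval y q * hermMvFn α y ∂(gaussPi n)

/-- Normalized hypervariance `H_R(q) = (Σ_{α≠0} q̂(α)² R^{2|α|}) / q̂(0)²`. -/
noncomputable def hyperVar {n : ℕ} (R : ℝ) (q : MvPolynomial (Fin n) ℝ) : ℝ :=
  (∑' α : Fin n →₀ ℕ, if α = 0 then 0 else (hermCoeff q α) ^ 2 * R ^ (2 * wt α)) /
    (hermCoeff q 0) ^ 2

section Aux
open Polynomial


noncomputable def Hr (m : ℕ) : Polynomial ℝ := (hermite m).map (Int.castRingHom ℝ)

lemma Hr_succ (m : ℕ) : Hr (m+1) = X * Hr m - derivative (Hr m) := by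
  unfold Hr
  rw [hermite_succ, Polynomial.map_sub, Polynomial.map_mul, Polynomial.map_X,
    Polynomial.derivative_map]

lemma deriv_Hr_succ (m : ℕ) : derivative (Hr (m+1)) = ((m+1 : ℕ) : ℝ) • Hr m := by
  induction m with
  | zero => simp [Hr, hermite_one, hermite_zero]
  | succ m ih =>
    rw [Hr_succ (m+1), derivative_sub, derivative_mul, derivative_X, one_mul, ih,
      _root_.map_smul, mul_smul_comm, add_sub_assoc, ← smul_sub, ← Hr_succ]
    push_cast
    module

lemma deriv_Hr (m : ℕ) : derivative (Hr m) = (m : ℝ) • Hr (m - 1) := by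
  cases m with
  | zero => simp [Hr, hermite_zero]
  | succ m => simpa using deriv_Hr_succ m

lemma Hr_eval_succ (m : ℕ) (t : ℝ) :
    (Hr (m+1)).eval t = t * (Hr m).eval t - (m : ℝ) * (Hr (m-1)).eval t := by
  rw [Hr_succ, deriv_Hr]
  simp [mul_comm]

lemma iter_deriv_Hr (m k : ℕ) :
    derivative^[k] (Hr m) = ((m.descFactorial k : ℕ) : ℝ) • Hr (m - k) := by
  induction k with
  | zero => simp
  | succ k ih =>
    rw [Function.iterate_succ_apply', ih, _root_.map_smul, deriv_Hr, smul_smul, Nat.sub_sub,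
      Nat.descFactorial_succ]
    congr 1
    push_cast [Nat.descFactorial_succ]
    ring

noncomputable def Sfun (ρ s x y : ℝ) (m : ℕ) : ℝ :=
  ∑ k ∈ Finset.range (m+1),
    (m.choose k : ℝ) * ρ^(m-k) * s^k * (Hr (m-k)).eval x * (Hr k).eval y

lemma choose_mul_sub (m k : ℕ) :
    ((m+1).choose k : ℝ) * ((m+1) - k : ℕ) = (m+1) * (m.choose k) := by
  have h3 : (m+1).choose k * (m+1-k) = (m+1) * m.choose k := by
    rw [← Nat.choose_succ_right_eq, Nat.add_one_mul_choose_eq]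
  exact_mod_cast congrArg (Nat.cast : ℕ → ℝ) h3

lemma Sfun_rec (ρ s x y : ℝ) (h : ρ^2 + s^2 = 1) (m : ℕ) :
    Sfun ρ s x y (m+2)
      = (ρ*x+s*y) * Sfun ρ s x y (m+1) - ((m+1 : ℕ) : ℝ) * Sfun ρ s x y m := by
  set A : ℕ → ℝ := fun j => (Hr j).eval x with hA
  set B : ℕ → ℝ := fun j => (Hr j).eval y with hB
  set M := m + 1 with hM
  -- Pascal split
  have step1 : Sfun ρ s x y (M+1)
      = (∑ k ∈ Finset.range (M+1), (M.choose k : ℝ) * ρ^(M+1-k) * s^k * A (M+1-k) * B k)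
      + (∑ k ∈ Finset.range (M+1), (M.choose k : ℝ) * ρ^(M-k) * s^(k+1) * A (M-k) * B (k+1)) := by
    unfold Sfun
    rw [Finset.sum_range_succ' (fun k => ((M+1).choose k : ℝ) * ρ^(M+1-k) * s^k * A (M+1-k) * B k) (M+1)]
    have e1 : ∀ k, ((M+1).choose (k+1) : ℝ) * ρ^(M+1-(k+1)) * s^(k+1) * A (M+1-(k+1)) * B (k+1)
        = (M.choose k : ℝ) * ρ^(M-k) * s^(k+1) * A (M-k) * B (k+1)
          + (M.choose (k+1) : ℝ) * ρ^(M-k) * s^(k+1) * A (M-k) * B (k+1) := by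
      intro k
      rw [Nat.choose_succ_succ, Nat.succ_sub_succ]
      push_cast
      ring
    rw [Finset.sum_congr rfl (fun k _ => e1 k), Finset.sum_add_distrib]
    have e2 : (∑ k ∈ Finset.range (M+1), (M.choose (k+1) : ℝ) * ρ^(M-k) * s^(k+1) * A (M-k) * B (k+1))
        + ((M+1).choose 0 : ℝ) * ρ^(M+1-0) * s^0 * A (M+1-0) * B 0
        = ∑ k ∈ Finset.range (M+1), (M.choose k : ℝ) * ρ^(M+1-k) * s^k * A (M+1-k) * B k := by
      have := Finset.sum_range_succ' (fun k => (M.choose k : ℝ) * ρ^(M+1-k) * s^k * A (M+1-k) * B k) (M+1)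
      rw [Finset.sum_range_succ (fun k => (M.choose k : ℝ) * ρ^(M+1-k) * s^k * A (M+1-k) * B k) (M+1)] at this
      simp only [Nat.choose_self, Nat.choose_succ_self, Nat.cast_zero, Nat.choose_zero_right] at this ⊢
      simp only [Nat.succ_sub_succ, zero_mul, add_zero] at this
      push_cast at this ⊢
      linarith [this]
    rw [add_assoc, e2]
    ring
  have step2 : (∑ k ∈ Finset.range (M+1), (M.choose k : ℝ) * ρ^(M+1-k) * s^k * A (M+1-k) * B k)
      = ρ*x*Sfun ρ s x y M - ((m+1 : ℕ) : ℝ) * ρ^2 * Sfun ρ s x y m := by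
    have e3 : ∀ k ∈ Finset.range (M+1),
        (M.choose k : ℝ) * ρ^(M+1-k) * s^k * A (M+1-k) * B k
        = ρ*x*((M.choose k : ℝ) * ρ^(M-k) * s^k * A (M-k) * B k)
          - ((m+1 : ℕ) : ℝ) * (m.choose k : ℝ) * ρ^(M+1-k) * s^k * A (m-k) * B k := by
      intro k hk
      rw [Finset.mem_range] at hk
      have h1 : M + 1 - k = (M - k) + 1 := by omega
      have h2 : M - k - 1 = m - k := by omega
      rw [h1]
      show _ * ρ^((M-k)+1) * _ * (Hr ((M-k)+1)).eval x * _ = _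
      rw [Hr_eval_succ (M-k) x, h2]
      have h4 : ((M.choose k : ℝ)) * ((M - k : ℕ) : ℝ) = ((m:ℝ)+1) * (m.choose k : ℝ) :=
        choose_mul_sub m k
      simp only [hA, hB]
      push_cast
      linear_combination (-(ρ^((M-k)+1) * s^k * (Hr (m-k)).eval x * (Hr k).eval y)) * h4
    rw [Finset.sum_congr rfl e3, Finset.sum_sub_distrib]
    congr 1
    · unfold Sfun
      rw [Finset.mul_sum]
    · have h6 : ∀ k, ((m+1 : ℕ) : ℝ) * (m.choose k : ℝ) * ρ^(M+1-k) * s^k * A (m-k) * B k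
          = ((m+1 : ℕ) : ℝ) * ((m.choose k : ℝ) * ρ^(m+2-k) * s^k * A (m-k) * B k) := by
        intro k
        have : M + 1 - k = m + 2 - k := by omega
        rw [this]; ring
      rw [Finset.sum_congr rfl (fun k _ => h6 k), ← Finset.mul_sum,
        Finset.sum_range_succ]
      simp only [hM, Nat.choose_succ_self, Nat.cast_zero, zero_mul, add_zero]
      unfold Sfun
      rw [Finset.mul_sum, Finset.mul_sum]
      apply Finset.sum_congr rfl
      intro k hk
      rw [Finset.mem_range] at hk
      have h7 : m + 2 - k = (m - k) + 2 := by omega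
      rw [h7]
      ring
  have step3 : (∑ k ∈ Finset.range (M+1), (M.choose k : ℝ) * ρ^(M-k) * s^(k+1) * A (M-k) * B (k+1))
      = s*y*Sfun ρ s x y M - ((m+1 : ℕ) : ℝ) * s^2 * Sfun ρ s x y m := by
    have e3 : ∀ k ∈ Finset.range (M+1),
        (M.choose k : ℝ) * ρ^(M-k) * s^(k+1) * A (M-k) * B (k+1)
        = s*y*((M.choose k : ℝ) * ρ^(M-k) * s^k * A (M-k) * B k)
          - (M.choose k : ℝ) * (k : ℝ) * ρ^(M-k) * s^(k+1) * A (M-k) * B (k-1) := by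
      intro k hk
      show _ = _ - _ * _ * _ * _ * _ * (Hr (k-1)).eval y
      rw [show B (k+1) = (Hr (k+1)).eval y from rfl, Hr_eval_succ k y]
      show _ * ρ^(M-k) * s^(k+1) * _ * _ = _
      ring
    rw [Finset.sum_congr rfl e3, Finset.sum_sub_distrib]
    congr 1
    · unfold Sfun
      rw [Finset.mul_sum]
    · rw [Finset.sum_range_succ']
      simp only [Nat.cast_zero, mul_zero, zero_mul, add_zero]
      have h8 : ∀ j, ((M.choose (j+1) : ℝ) * ((j+1 : ℕ) : ℝ)) * ρ^(M-(j+1)) * s^(j+1+1) * A (M-(j+1)) * B (j+1-1)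
          = ((m+1 : ℕ) : ℝ) * s^2 * ((m.choose j : ℝ) * ρ^(m-j) * s^j * A (m-j) * B j) := by
        intro j
        have h9 : (M.choose (j+1)) * (j+1) = (m+1) * m.choose j := by
          rw [← Nat.add_one_mul_choose_eq]
        have h9' : ((M.choose (j+1) : ℝ)) * ((j+1 : ℕ) : ℝ) = ((m+1 : ℕ) : ℝ) * (m.choose j : ℝ) := by
          exact_mod_cast congrArg (Nat.cast : ℕ → ℝ) h9
        have h10 : M - (j+1) = m - j := by omega
        have h11 : j + 1 - 1 = j := by omega
        rw [h10, h11, h9']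
        ring
      calc ∑ j ∈ Finset.range M, (M.choose (j+1) : ℝ) * ((j+1 : ℕ) : ℝ) * ρ^(M-(j+1)) * s^(j+1+1) * A (M-(j+1)) * B (j+1-1)
          = ∑ j ∈ Finset.range (m+1), ((m+1 : ℕ) : ℝ) * s^2 * ((m.choose j : ℝ) * ρ^(m-j) * s^j * A (m-j) * B j) := by
            apply Finset.sum_congr rfl
            intro j _
            have := h8 j
            push_cast at this ⊢
            linarith [this]
        _ = ((m+1 : ℕ) : ℝ) * s^2 * Sfun ρ s x y m := by
            rw [← Finset.mul_sum]; rfl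
  have : M + 1 = m + 2 := rfl
  rw [← this, step1, step2, step3]
  have hSm := Sfun ρ s x y m
  linear_combination (-((m+1 : ℕ) : ℝ)) * Sfun ρ s x y m * h

lemma hermite_addition (ρ s x y : ℝ) (h : ρ^2 + s^2 = 1) (m : ℕ) :
    (Hr m).eval (ρ*x + s*y) = Sfun ρ s x y m := by
  induction m using Nat.twoStepInduction with
  | zero => simp [Sfun, Hr, hermite_zero]
  | one => simp [Sfun, Finset.sum_range_succ, Hr, hermite_zero, hermite_one]
  | more m ih1 ih2 =>
    have e := Hr_eval_succ (m+1) (ρ*x + s*y)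
    simp only [Nat.add_sub_cancel] at e
    rw [e, ih1, ih2, Sfun_rec ρ s x y h m]

section Mv
open MvPolynomial

variable {n : ℕ}

lemma eval_aeval_X (x : Fin n → ℝ) (i : Fin n) (p : Polynomial ℝ) :
    MvPolynomial.eval x (Polynomial.aeval (X i : MvPolynomial (Fin n) ℝ) p) = p.eval (x i) := by
  rw [Polynomial.aeval_def, Polynomial.hom_eval₂]
  have : (MvPolynomial.eval x).comp (MvPolynomial.C : ℝ →+* _) = RingHom.id ℝ := by ext r; simp
  simp [this, Polynomial.eval₂_eq_eval_map]

lemma pderiv_aeval_ne (i j : Fin n) (hij : j ≠ i) (p : Polynomial ℝ) :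
    pderiv i (Polynomial.aeval (X j : MvPolynomial (Fin n) ℝ) p) = 0 := by
  refine Polynomial.induction_on' p ?_ ?_
  · intro p q hp hq; simp [hp, hq]
  · intro k a
    simp [Polynomial.aeval_monomial, pderiv_X, Pi.single_eq_of_ne hij]

lemma pderiv_aeval_self (i : Fin n) (p : Polynomial ℝ) :
    pderiv i (Polynomial.aeval (X i : MvPolynomial (Fin n) ℝ) p) =
      Polynomial.aeval (X i : MvPolynomial (Fin n) ℝ) (Polynomial.derivative p) := by
  refine Polynomial.induction_on' p ?_ ?_
  · intro p q hp hq; simp [hp, hq]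
  · intro k a
    simp [Polynomial.aeval_monomial, pderiv_X, Polynomial.derivative_monomial,
      pderiv_pow, Pi.single_eq_same]
    ring

lemma pderiv_prod_zero (i : Fin n) (q : Fin n → Polynomial ℝ) (s : Finset (Fin n)) (hi : i ∉ s) :
    pderiv i (∏ j ∈ s, Polynomial.aeval (X j : MvPolynomial (Fin n) ℝ) (q j)) = 0 := by
  induction s using Finset.induction_on with
  | empty => simp
  | insert a t hns ih =>
    rw [Finset.prod_insert hns, pderiv_mul]
    rw [ih (fun h => hi (Finset.mem_insert_of_mem h)),
      pderiv_aeval_ne i a (fun h => hi (h ▸ Finset.mem_insert_self a t))]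
    simp

lemma pderiv_prod_aeval (i : Fin n) (q : Fin n → Polynomial ℝ) :
    pderiv i (∏ j, Polynomial.aeval (X j : MvPolynomial (Fin n) ℝ) (q j))
      = ∏ j, Polynomial.aeval (X j : MvPolynomial (Fin n) ℝ)
          (Function.update q i (Polynomial.derivative (q i)) j) := by
  have hR : (∏ j, Polynomial.aeval (X j : MvPolynomial (Fin n) ℝ)
        (Function.update q i (Polynomial.derivative (q i)) j))
      = Polynomial.aeval (X i : MvPolynomial (Fin n) ℝ) (Polynomial.derivative (q i))
        * ∏ j ∈ Finset.univ.erase i, Polynomial.aeval (X j : MvPolynomial (Fin n) ℝ) (q j) := by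
    rw [← Finset.mul_prod_erase Finset.univ _ (Finset.mem_univ i), Function.update_self]
    congr 1
    apply Finset.prod_congr rfl
    intro j hj
    rw [Function.update_of_ne (Finset.ne_of_mem_erase hj)]
  rw [hR, ← Finset.mul_prod_erase Finset.univ _ (Finset.mem_univ i), pderiv_mul,
    pderiv_prod_zero i q _ (Finset.notMem_erase i _), pderiv_aeval_self]
  simp

lemma pdList (L : List (Fin n)) (q : Fin n → Polynomial ℝ) :
    (L.map fun i => ((pderiv i).toLinearMap : Module.End ℝ (MvPolynomial (Fin n) ℝ))).prod
        (∏ j, Polynomial.aeval (X j : MvPolynomial (Fin n) ℝ) (q j))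
      = ∏ j, Polynomial.aeval (X j : MvPolynomial (Fin n) ℝ)
          ((⇑Polynomial.derivative)^[L.count j] (q j)) := by
  induction L generalizing q with
  | nil => simp
  | cons a L ih =>
    rw [List.map_cons, List.prod_cons, Module.End.mul_apply, ih q]
    show pderiv a _ = _
    rw [pderiv_prod_aeval a]
    apply Finset.prod_congr rfl
    intro j _
    congr 1
    by_cases hj : j = a
    · subst hj
      rw [Function.update_self, List.count_cons_self, Function.iterate_succ_apply']
    · rw [Function.update_of_ne hj, List.count_cons_of_ne (by simpa using Ne.symm hj)]

lemma mpderiv_prod (α : Fin n →₀ ℕ) (q : Fin n → Polynomial ℝ) :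
    mpderiv α (∏ j, Polynomial.aeval (X j : MvPolynomial (Fin n) ℝ) (q j))
      = ∏ j, Polynomial.aeval (X j : MvPolynomial (Fin n) ℝ)
          ((⇑Polynomial.derivative)^[α j] (q j)) := by
  set Dfun : Fin n → Module.End ℝ (MvPolynomial (Fin n) ℝ) :=
    fun i => (pderiv i).toLinearMap with hD
  set L : List (Fin n) := (List.ofFn fun i => List.replicate (α i) i).flatten with hL
  have h1 : (List.ofFn fun i : Fin n => Dfun i ^ (α i)).prod = (L.map Dfun).prod := by
    rw [hL, List.map_flatten, List.map_ofFn, List.prod_flatten, List.map_ofFn]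
    have he : (fun i : Fin n => Dfun i ^ (α i))
        = (List.prod ∘ List.map Dfun ∘ fun i => List.replicate (α i) i) := by
      funext i
      simp [List.map_replicate, List.prod_replicate]
    rw [he]
  have hc : ∀ j : Fin n, L.count j = α j := by
    intro j
    rw [hL, List.count_flatten, List.map_ofFn, List.sum_ofFn]
    simp only [Function.comp, List.count_replicate]
    simp
  show (List.ofFn fun i : Fin n => Dfun i ^ (α i)).prod _ = _
  rw [h1, pdList L q]
  apply Finset.prod_congr rfl
  intro j _
  rw [hc j]

end Mv

lemma sqrt_pow' (a : ℝ) (h : 0 ≤ a) (n : ℕ) : Real.sqrt (a^n) = Real.sqrt a ^ n := by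
  have e : a ^ n = (Real.sqrt a ^ n)^2 := by
    rw [← pow_mul, pow_mul', Real.sq_sqrt h]
  rw [e, Real.sqrt_sq (pow_nonneg (Real.sqrt_nonneg a) n)]

lemma sqrt_prod' {ι : Type*} (s : Finset ι) (f : ι → ℝ) (hf : ∀ i ∈ s, 0 ≤ f i) :
    Real.sqrt (∏ i ∈ s, f i) = ∏ i ∈ s, Real.sqrt (f i) := by
  induction s using Finset.cons_induction with
  | empty => simp
  | cons a t ha ih =>
    rw [Finset.prod_cons, Finset.prod_cons,
      Real.sqrt_mul (hf a (Finset.mem_cons_self a t)),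
      ih (fun i hi => hf i (Finset.mem_cons_of_mem hi))]

section Mv2
open MvPolynomial

variable {n : ℕ}

lemma hermPoly_eq (m : ℕ) : hermPoly m = (Real.sqrt (Nat.factorial m))⁻¹ • Hr m := by
  rw [hermPoly, Polynomial.smul_eq_C_mul]; rfl

lemma iter_deriv_hermPoly (m k : ℕ) :
    (⇑Polynomial.derivative)^[k] (hermPoly m)
      = ((Real.sqrt (Nat.factorial m))⁻¹ * ((m.descFactorial k : ℕ) : ℝ)) • Hr (m - k) := by
  rw [hermPoly_eq, Polynomial.iterate_derivative_smul, iter_deriv_Hr, smul_smul]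

lemma eval_mpderiv_hermMv (α β : Fin n →₀ ℕ) (x : Fin n → ℝ) :
    MvPolynomial.eval x (mpderiv α (hermMvPoly β))
      = ∏ i, ((Real.sqrt (Nat.factorial (β i)))⁻¹ * (((β i).descFactorial (α i) : ℕ) : ℝ)
          * (Hr (β i - α i)).eval (x i)) := by
  rw [hermMvPoly, mpderiv_prod, map_prod]
  apply Finset.prod_congr rfl
  intro i _
  rw [eval_aeval_X, iter_deriv_hermPoly, Polynomial.eval_smul]
  simp [mul_assoc]

lemma wt_eq (α : Fin n →₀ ℕ) : wt α = ∑ i, α i :=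
  Finsupp.sum_fintype α _ (fun _ => rfl)

lemma fact_eq (α : Fin n →₀ ℕ) : fact α = ∏ i, Nat.factorial (α i) :=
  Finsupp.prod_fintype α _ (fun _ => rfl)

lemma sum_Iic_eq_prod_sum (β : Fin n →₀ ℕ) (U : Fin n → ℕ → ℝ) :
    (∑ α ∈ Finset.Iic β, ∏ i, U i (α i)) = ∏ i, ∑ k ∈ Finset.range (β i + 1), U i k := by
  rw [Finset.prod_sum]
  refine Finset.sum_bij' (fun α _ => fun i _ => α i)
    (fun g _ => Finsupp.equivFunOnFinite.symm (fun i => g i (Finset.mem_univ i))) ?_ ?_ ?_ ?_ ?_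
  · intro α hα
    rw [Finset.mem_Iic] at hα
    rw [Finset.mem_pi]
    intro i _
    rw [Finset.mem_range, Nat.lt_succ_iff]
    exact hα i
  · intro g hg
    rw [Finset.mem_pi] at hg
    rw [Finset.mem_Iic]
    intro i
    have := hg i (Finset.mem_univ i)
    rw [Finset.mem_range, Nat.lt_succ_iff] at this
    simpa using this
  · intro α _
    ext i
    simp
  · intro g _
    rfl
  · intro α _
    rw [← Finset.prod_attach Finset.univ (fun i => U i (α i))]

end Mv2

open scoped Classical in
lemma herm_eq (k : ℕ) (t : ℝ) : herm k t = (Hr k).eval t / Real.sqrt (Nat.factorial k) := rfl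


end Aux

/-- Hermite-basis analogue of the Taylor expansion:
`f(√(1-λ)x + √λ y) = Σ_α (∂^α g(x)/√(α!)) (λ/(1-λ))^{|α|/2} h_α(y)` with `g = U_{√(1-λ)} f`. -/
theorem hermite_taylor_expansion (n : ℕ) (lam : ℝ) (h1 : 0 < lam) (h2 : lam < 1)
    (A : Finset (Fin n →₀ ℕ)) (c : (Fin n →₀ ℕ) → ℝ)
    (F G : MvPolynomial (Fin n) ℝ)
    (hF : F = ∑ α ∈ A, c α • hermMvPoly α)
    (hG : G = ∑ α ∈ A, (c α * Real.sqrt ((1 - lam) ^ (wt α))) • hermMvPoly α)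
    (x y : Fin n → ℝ) :
    MvPolynomial.eval (fun i => Real.sqrt (1 - lam) * x i + Real.sqrt lam * y i) F
      = ∑ α ∈ A.biUnion (fun β => Finset.Iic β),
          (MvPolynomial.eval x (mpderiv α G) / Real.sqrt (fact α))
            * Real.sqrt ((lam / (1 - lam)) ^ (wt α)) * hermMvFn α y := by
  classical
  set ρ := Real.sqrt (1 - lam) with hρdef
  set s := Real.sqrt lam with hsdef
  have hlam1 : (0:ℝ) ≤ 1 - lam := by linarith
  have hρ2 : ρ^2 = 1 - lam := Real.sq_sqrt hlam1
  have hs2 : s^2 = lam := Real.sq_sqrt h1.le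
  have hρpos : 0 < ρ := Real.sqrt_pos.2 (by linarith)
  have hh : ρ^2 + s^2 = 1 := by rw [hρ2, hs2]; ring
  set r := Real.sqrt (lam / (1 - lam)) with hrdef
  have hrs : r = s / ρ := by rw [hrdef]; exact Real.sqrt_div h1.le _
  set B := A.biUnion (fun β => Finset.Iic β) with hB
  set U : (Fin n →₀ ℕ) → Fin n → ℕ → ℝ := fun β i k =>
    (ρ ^ (β i) * ((Real.sqrt (Nat.factorial (β i)))⁻¹ * (((β i).descFactorial k : ℕ) : ℝ)
        * (Hr (β i - k)).eval (x i)))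
      * ((Real.sqrt (Nat.factorial k))⁻¹ * (r ^ k * herm k (y i))) with hU
  have hterm : ∀ α ∈ B, (MvPolynomial.eval x (mpderiv α G) / Real.sqrt (fact α))
      * Real.sqrt ((lam / (1 - lam)) ^ (wt α)) * hermMvFn α y
      = ∑ β ∈ A, c β * ∏ i, U β i (α i) := by
    intro α _
    have hmp : MvPolynomial.eval x (mpderiv α G)
        = ∑ β ∈ A, (c β * Real.sqrt ((1 - lam) ^ (wt β)))
            * ∏ i, ((Real.sqrt (Nat.factorial (β i)))⁻¹ * (((β i).descFactorial (α i) : ℕ) : ℝ)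
                * (Hr (β i - α i)).eval (x i)) := by
      rw [hG]
      have hlin : mpderiv α (∑ β ∈ A, (c β * Real.sqrt ((1 - lam) ^ (wt β))) • hermMvPoly β)
          = ∑ β ∈ A, (c β * Real.sqrt ((1 - lam) ^ (wt β))) • mpderiv α (hermMvPoly β) := by
        unfold mpderiv
        rw [_root_.map_sum]
        exact Finset.sum_congr rfl fun β _ => _root_.map_smul _ _ _
      rw [hlin, _root_.map_sum]
      apply Finset.sum_congr rfl
      intro β _
      rw [MvPolynomial.smul_eq_C_mul, map_mul, MvPolynomial.eval_C, eval_mpderiv_hermMv]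
    rw [hmp, Finset.sum_div, Finset.sum_mul, Finset.sum_mul]
    apply Finset.sum_congr rfl
    intro β _
    have e1 : Real.sqrt ((1 - lam) ^ (wt β)) = ∏ i, ρ ^ (β i) := by
      rw [sqrt_pow' _ hlam1, ← hρdef, wt_eq, ← Finset.prod_pow_eq_pow_sum]
    have e2 : Real.sqrt ((lam / (1 - lam)) ^ (wt α)) = ∏ i, r ^ (α i) := by
      rw [sqrt_pow' _ (div_nonneg h1.le hlam1), ← hrdef, wt_eq, ← Finset.prod_pow_eq_pow_sum]
    have e3 : Real.sqrt (fact α) = ∏ i, Real.sqrt (Nat.factorial (α i)) := by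
      rw [fact_eq]
      push_cast
      rw [sqrt_prod' _ _ (fun i _ => by positivity)]
    rw [e1, e2, e3, hermMvFn, div_eq_mul_inv, ← Finset.prod_inv_distrib]
    simp only [hU, Finset.prod_mul_distrib]
    ring
  rw [Finset.sum_congr rfl hterm, Finset.sum_comm]
  have hkey : ∀ β ∈ A, (∑ α ∈ B, c β * ∏ i, U β i (α i))
      = c β * ∏ i, (hermPoly (β i)).eval (ρ * x i + s * y i) := by
    intro β hβ
    rw [← Finset.mul_sum]
    congr 1
    have hsub : Finset.Iic β ⊆ B := fun α hα => Finset.mem_biUnion.2 ⟨β, hβ, hα⟩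
    have hvan : ∀ α ∈ B, α ∉ Finset.Iic β → (∏ i, U β i (α i)) = 0 := by
      intro α _ hα
      rw [Finset.mem_Iic] at hα
      obtain ⟨i, hi⟩ : ∃ i, β i < α i := by
        by_contra hcon
        push_neg at hcon
        exact hα (Finsupp.le_def.2 hcon)
      apply Finset.prod_eq_zero (Finset.mem_univ i)
      simp only [hU]
      rw [Nat.descFactorial_eq_zero_iff_lt.2 hi]
      simp
    rw [← Finset.sum_subset hsub hvan, sum_Iic_eq_prod_sum β (U β)]
    apply Finset.prod_congr rfl
    intro i _
    have hadd := hermite_addition ρ s (x i) (y i) hh (β i)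
    rw [hermPoly_eq, Polynomial.eval_smul, smul_eq_mul, hadd, Sfun, Finset.mul_sum]
    apply Finset.sum_congr rfl
    intro k hk
    rw [Finset.mem_range, Nat.lt_succ_iff] at hk
    simp only [hU]
    rw [herm_eq]
    have hdf : (((β i).descFactorial k : ℕ) : ℝ)
        = (Nat.factorial k : ℝ) * (((β i).choose k : ℕ) : ℝ) := by
      exact_mod_cast congrArg (Nat.cast : ℕ → ℝ) (Nat.descFactorial_eq_factorial_mul_choose _ k)
    have hρk : ρ ^ (β i) = ρ ^ (β i - k) * ρ ^ k := by
      rw [← pow_add, Nat.sub_add_cancel hk]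
    have hrk : r ^ k = s ^ k / ρ ^ k := by rw [hrs, div_pow]
    have hsk : Real.sqrt (Nat.factorial k) * Real.sqrt (Nat.factorial k)
        = (Nat.factorial k : ℝ) := Real.mul_self_sqrt (by positivity)
    have hρkne : ρ ^ k ≠ 0 := pow_ne_zero k (ne_of_gt hρpos)
    have hkfne : Real.sqrt (Nat.factorial k) ≠ 0 := by positivity
    rw [hdf, ← hsk, hρk, hrk]
    field_simp
    rw [Real.sqrt_sq (Real.sqrt_nonneg _)]
    linear_combination (0 : ℝ) * ((ρ ^ (β i - k)) * ρ ^ k * (((β i).choose k : ℕ) : ℝ)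
      * (Hr (β i - k)).eval (x i) * s ^ k * (Hr k).eval (y i)
      * Real.sqrt ((β i).factorial)) * hsk
  rw [Finset.sum_congr rfl hkey, hF, _root_.map_sum]
  apply Finset.sum_congr rfl
  intro β _
  rw [MvPolynomial.smul_eq_C_mul, map_mul, MvPolynomial.eval_C, hermMvPoly, map_prod]
  congr 1
  apply Finset.prod_congr rfl
  intro i _
  rw [eval_aeval_X]
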